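/- Let U ∈ ℝ^{n×r} have orthonormal columns and satisfy assumption A2 with parameter δ_d: for every S ⊆ {1,…,n} with |S| = d, ‖(n/d)·∑_{k∈S} U^k(U^k)ᵀ − I‖ ≤ δ_d. Let G ∈ {0,1}^{n×n} have exactly d ones in every column, and let Ω be the support of G with sampling operator P_Ω. Then for every X ∈ ℝ^{n×r}, ‖UUᵀ·((n/d)·P_Ω(UXᵀ) − UXᵀ)‖_F ≤ δ_d·‖X‖_F. -/

import Mathlib

open Matrix
open scoped BigOperators

noncomputable section

/-- Euclidean norm of a vector. -/
def vecNorm {β : Type*} [Fintype β] (x : β → ℝ) : ℝ :=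
  Real.sqrt (∑ i, x i ^ 2)

/-- Spectral norm (largest singular value) of a real matrix. -/
def specNorm {α β : Type*} [Fintype α] [Fintype β] (A : Matrix α β ℝ) : ℝ :=
  sSup {c | ∃ x : β → ℝ, vecNorm x ≤ 1 ∧ c = vecNorm (A.mulVec x)}

/-- Second largest singular value of a real matrix (Courant–Fischer characterization). -/
def sigma2 {α β : Type*} [Fintype α] [Fintype β] (A : Matrix α β ℝ) : ℝ :=
  ⨅ v : β → ℝ, sSup {c | ∃ x : β → ℝ,
    vecNorm x ≤ 1 ∧ (∑ i, v i * x i) = 0 ∧ c = vecNorm (A.mulVec x)}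

/-- Frobenius norm. -/
def frobNorm {α β : Type*} [Fintype α] [Fintype β] (A : Matrix α β ℝ) : ℝ :=
  Real.sqrt (∑ i, ∑ j, A i j ^ 2)

/-- Nuclear norm: the sum of the singular values, i.e. the trace of `√(AᵀA)`. -/
def nuclearNorm {α β : Type*} [Fintype α] [Fintype β] [DecidableEq β]
    (A : Matrix α β ℝ) : ℝ :=
  (let hA := (Matrix.posSemidef_conjTranspose_mul_self A).isHermitian
   (hA.eigenvectorUnitary.1 * Matrix.diagonal ((RCLike.ofReal : ℝ → ℝ) ∘ (√·) ∘ hA.eigenvalues) *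
     (star hA.eigenvectorUnitary : Matrix β β ℝ))).trace

/-- The sampling operator `P_Ω`. -/
def sampl {n : ℕ} (Ω : Finset (Fin n × Fin n)) (M : Matrix (Fin n) (Fin n) ℝ) :
    Matrix (Fin n) (Fin n) ℝ :=
  Matrix.of fun i j => if (i, j) ∈ Ω then M i j else 0

/-- The biadjacency matrix `G` of the bipartite graph with edge set `Ω`. -/
def biadj {n : ℕ} (Ω : Finset (Fin n × Fin n)) : Matrix (Fin n) (Fin n) ℝ :=
  Matrix.of fun i j => if (i, j) ∈ Ω then (1 : ℝ) else 0

/-- `Ω` is the edge set of a `d`-regular bipartite graph: every row and every column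
of `G` has exactly `d` ones. -/
def RegularSampling {n : ℕ} (Ω : Finset (Fin n × Fin n)) (d : ℕ) : Prop :=
  (∀ i : Fin n, (Finset.univ.filter fun j => (i, j) ∈ Ω).card = d) ∧
  (∀ j : Fin n, (Finset.univ.filter fun i => (i, j) ∈ Ω).card = d)

/-- Assumption G1: the all-ones vector is a top left- and right-singular vector of `G`,
with `σ₁(G) = d`. -/
def AssumptionG1 {n : ℕ} (Ω : Finset (Fin n × Fin n)) (d : ℕ) : Prop :=
  specNorm (biadj Ω) = d ∧
  (biadj Ω).mulVec (fun _ => 1) = (fun _ => (d : ℝ)) ∧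
  Matrix.vecMul (fun _ => 1) (biadj Ω) = (fun _ => (d : ℝ))

/-- Assumption G2: `σ₂(G) ≤ C·√d`. -/
def AssumptionG2 {n : ℕ} (Ω : Finset (Fin n × Fin n)) (d : ℕ) (C : ℝ) : Prop :=
  sigma2 (biadj Ω) ≤ C * Real.sqrt d

/-- Assumption A1 (`μ₀`-incoherence) for one factor: every row `U^i` satisfies
`‖U^i‖² ≤ μ₀ r / n`. -/
def IncoherentRows {n r : ℕ} (U : Matrix (Fin n) (Fin r) ℝ) (μ₀ : ℝ) : Prop :=
  ∀ i : Fin n, (∑ k, U i k ^ 2) ≤ μ₀ * r / n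

/-- Assumption A2 (strong incoherence with parameter `δ`) for one factor:
for every `S` with `|S| = d`, `‖(n/d)·∑_{k∈S} U^k (U^k)ᵀ − I‖ ≤ δ`. -/
def StrongIncoherence {n r : ℕ} (U : Matrix (Fin n) (Fin r) ℝ) (d : ℕ) (δ : ℝ) : Prop :=
  ∀ S : Finset (Fin n), S.card = d →
    specNorm (((n : ℝ) / (d : ℝ)) • (∑ k ∈ S, Matrix.vecMulVec (U k) (U k)) - 1) ≤ δ

/-- `M = U · diagonal s · Vᵀ` is a thin SVD of the rank-`r` matrix `M`. -/
def IsThinSVD {n r : ℕ} (M : Matrix (Fin n) (Fin n) ℝ)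
    (U : Matrix (Fin n) (Fin r) ℝ) (s : Fin r → ℝ) (V : Matrix (Fin n) (Fin r) ℝ) : Prop :=
  Uᵀ * U = 1 ∧ Vᵀ * V = 1 ∧ (∀ i, 0 < s i) ∧ M = U * Matrix.diagonal s * Vᵀ

/-- The projection `P_T` onto the subspace `T` spanned by matrices `UXᵀ` and `YVᵀ`. -/
def projT {n r : ℕ} (U V : Matrix (Fin n) (Fin r) ℝ) (Z : Matrix (Fin n) (Fin n) ℝ) :
    Matrix (Fin n) (Fin n) ℝ :=
  U * Uᵀ * Z + Z * (V * Vᵀ) - U * Uᵀ * Z * (V * Vᵀ)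

/-- The projection `P_{T⊥}` onto the orthogonal complement of `T`. -/
def projTperp {n r : ℕ} (U V : Matrix (Fin n) (Fin r) ℝ) (Z : Matrix (Fin n) (Fin n) ℝ) :
    Matrix (Fin n) (Fin n) ℝ :=
  (1 - U * Uᵀ) * Z * (1 - V * Vᵀ)

end

section Helpers

lemma vecNorm_nonneg {β : Type*} [Fintype β] (x : β → ℝ) : 0 ≤ vecNorm x :=
  Real.sqrt_nonneg _

lemma sq_vecNorm {β : Type*} [Fintype β] (x : β → ℝ) : vecNorm x ^ 2 = ∑ i, x i ^ 2 :=
  Real.sq_sqrt (Finset.sum_nonneg fun i _ => sq_nonneg _)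

lemma frobNorm_nonneg {α β : Type*} [Fintype α] [Fintype β] (A : Matrix α β ℝ) :
    0 ≤ frobNorm A := Real.sqrt_nonneg _

lemma vecNorm_smul {β : Type*} [Fintype β] (c : ℝ) (x : β → ℝ) :
    vecNorm (c • x) = |c| * vecNorm x := by
  unfold vecNorm
  have : ∑ i, (c • x) i ^ 2 = c ^ 2 * ∑ i, x i ^ 2 := by
    rw [Finset.mul_sum]
    exact Finset.sum_congr rfl fun i _ => by simp [mul_pow]
  rw [this, Real.sqrt_mul (sq_nonneg c), Real.sqrt_sq_eq_abs]

lemma vecNorm_eq_zero {β : Type*} [Fintype β] {x : β → ℝ} (h : vecNorm x = 0) :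
    x = 0 := by
  have hnn : (0:ℝ) ≤ ∑ i, x i ^ 2 := Finset.sum_nonneg fun i _ => sq_nonneg _
  have hs : ∑ i, x i ^ 2 = 0 := (Real.sqrt_eq_zero hnn).mp h
  funext i
  have := (Finset.sum_eq_zero_iff_of_nonneg (fun i _ => sq_nonneg (x i))).mp hs i
    (Finset.mem_univ i)
  exact pow_eq_zero_iff (by norm_num) |>.mp this

lemma mulVec_le_frob {α β : Type*} [Fintype α] [Fintype β] (A : Matrix α β ℝ)
    (x : β → ℝ) : vecNorm (A.mulVec x) ≤ frobNorm A * vecNorm x := by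
  unfold vecNorm frobNorm
  rw [← Real.sqrt_mul (show (0:ℝ) ≤ ∑ i, ∑ j, A i j ^ 2 from Finset.sum_nonneg fun i _ => Finset.sum_nonneg fun j _ => sq_nonneg _)]
  apply Real.sqrt_le_sqrt
  rw [Finset.sum_mul]
  apply Finset.sum_le_sum
  intro i _
  have := Finset.sum_mul_sq_le_sq_mul_sq Finset.univ (fun j => A i j) x
  simpa [Matrix.mulVec, dotProduct] using this

lemma specSet_bddAbove {α β : Type*} [Fintype α] [Fintype β] (A : Matrix α β ℝ) :
    BddAbove {c | ∃ x : β → ℝ, vecNorm x ≤ 1 ∧ c = vecNorm (A.mulVec x)} := by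
  refine ⟨frobNorm A, fun c hc => ?_⟩
  obtain ⟨x, hx, rfl⟩ := hc
  calc vecNorm (A.mulVec x) ≤ frobNorm A * vecNorm x := mulVec_le_frob A x
    _ ≤ frobNorm A * 1 := mul_le_mul_of_nonneg_left hx (frobNorm_nonneg A)
    _ = frobNorm A := mul_one _

lemma specNorm_nonneg {α β : Type*} [Fintype α] [Fintype β] (A : Matrix α β ℝ) :
    0 ≤ specNorm A := by
  apply le_csSup (specSet_bddAbove A)
  exact ⟨0, by simp [vecNorm], by simp [vecNorm]⟩

lemma mulVec_le_spec {α β : Type*} [Fintype α] [Fintype β] (A : Matrix α β ℝ)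
    (x : β → ℝ) : vecNorm (A.mulVec x) ≤ specNorm A * vecNorm x := by
  rcases eq_or_lt_of_le (vecNorm_nonneg x) with h | h
  · have hx : x = 0 := vecNorm_eq_zero h.symm
    subst hx
    simp [← h, vecNorm]
  · set c := vecNorm x with hc
    have hmem : vecNorm (A.mulVec (c⁻¹ • x)) ∈
        {c | ∃ y : β → ℝ, vecNorm y ≤ 1 ∧ c = vecNorm (A.mulVec y)} := by
      refine ⟨c⁻¹ • x, ?_, rfl⟩
      rw [vecNorm_smul, abs_of_nonneg (inv_nonneg.mpr h.le), ← hc, inv_mul_cancel₀ h.ne']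
    have hle : vecNorm (A.mulVec (c⁻¹ • x)) ≤ specNorm A :=
      le_csSup (specSet_bddAbove A) hmem
    rw [Matrix.mulVec_smul, vecNorm_smul, abs_of_nonneg (inv_nonneg.mpr h.le)] at hle
    calc vecNorm (A.mulVec x) = c * (c⁻¹ * vecNorm (A.mulVec x)) := by
          field_simp
      _ ≤ c * specNorm A := mul_le_mul_of_nonneg_left hle h.le
      _ = specNorm A * c := mul_comm _ _

end Helpers

/-- `‖UUᵀ((n/d)·P_Ω(UXᵀ) − UXᵀ)‖_F ≤ δ_d ‖X‖_F` under A2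
when every column of `G` has exactly `d` ones. -/
theorem stmt_8 {n d r : ℕ} {δ : ℝ} (U : Matrix (Fin n) (Fin r) ℝ) (hU : Uᵀ * U = 1)
    (hA2 : StrongIncoherence U d δ)
    (Ω : Finset (Fin n × Fin n))
    (hcol : ∀ j : Fin n, (Finset.univ.filter fun i => (i, j) ∈ Ω).card = d) :
    ∀ X : Matrix (Fin n) (Fin r) ℝ,
      frobNorm (U * Uᵀ * (((n : ℝ) / (d : ℝ)) • sampl Ω (U * Xᵀ) - U * Xᵀ)) ≤
        δ * frobNorm X := by
  intro X
  rcases Nat.eq_zero_or_pos n with hn | hn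
  · subst hn
    simp [frobNorm]
  -- abbreviations
  set N := ((n : ℝ) / (d : ℝ)) • sampl Ω (U * Xᵀ) - U * Xᵀ with hN
  set B : Fin n → Matrix (Fin r) (Fin r) ℝ := fun j =>
    ((n : ℝ) / (d : ℝ)) • (∑ k ∈ Finset.univ.filter (fun i => (i, j) ∈ Ω),
      Matrix.vecMulVec (U k) (U k)) - 1 with hB
  have hUU : ∀ k m, ∑ l, U l k * U l m = if k = m then (1 : ℝ) else 0 := by
    intro k m
    have := congrFun (congrFun hU k) m
    simpa [Matrix.mul_apply, Matrix.transpose_apply, Matrix.one_apply] using this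
  have hBspec : ∀ j, specNorm (B j) ≤ δ := fun j =>
    hA2 (Finset.univ.filter fun i => (i, j) ∈ Ω) (hcol j)
  have hδ : 0 ≤ δ := le_trans (specNorm_nonneg (B ⟨0, hn⟩)) (hBspec ⟨0, hn⟩)
  -- claim 1 : columns of Uᵀ * N
  have claim1 : ∀ k j, (Uᵀ * N) k j = (B j).mulVec (fun m => X j m) k := by
    intro k j
    have lhs_eq : (Uᵀ * N) k j =
        ((n : ℝ) / (d : ℝ)) * (∑ l ∈ Finset.univ.filter (fun i => (i, j) ∈ Ω),
          U l k * ∑ m, U l m * X j m) - ∑ l, ∑ m, U l k * (U l m * X j m) := by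
      simp only [hN, Matrix.mul_apply, Matrix.transpose_apply, Matrix.sub_apply,
        Matrix.smul_apply, sampl, Matrix.of_apply, smul_eq_mul]
      have step : ∀ x : Fin n,
          U x k * (((n : ℝ) / (d : ℝ)) * (if (x, j) ∈ Ω then ∑ m, U x m * X j m else 0)
            - ∑ m, U x m * X j m)
          = (if (x, j) ∈ Ω then U x k * ∑ m, U x m * X j m else 0) * ((n : ℝ) / (d : ℝ))
            - ∑ m, U x k * (U x m * X j m) := by
        intro x
        rw [← Finset.mul_sum]
        split <;> ring
      simp only [step]
      rw [Finset.sum_sub_distrib, ← Finset.sum_mul, ← Finset.sum_filter]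
      ring
    have rhs_eq : (B j).mulVec (fun m => X j m) k =
        ((n : ℝ) / (d : ℝ)) * (∑ l ∈ Finset.univ.filter (fun i => (i, j) ∈ Ω),
          U l k * ∑ m, U l m * X j m) - X j k := by
      simp only [hB, Matrix.mulVec, dotProduct, Matrix.sub_apply, Matrix.smul_apply,
        Matrix.sum_apply, Matrix.vecMulVec_apply, Matrix.one_apply, smul_eq_mul]
      have step : ∀ x : Fin r,
          (((n : ℝ) / (d : ℝ)) * (∑ l ∈ Finset.univ.filter (fun i => (i, j) ∈ Ω),
              U l k * U l x) - if k = x then 1 else 0) * X j x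
          = ((n : ℝ) / (d : ℝ)) * (∑ l ∈ Finset.univ.filter (fun i => (i, j) ∈ Ω),
              U l k * (U l x * X j x)) - (if k = x then 1 else 0) * X j x := by
        intro x
        rw [sub_mul, mul_assoc, Finset.sum_mul]
        congr 2
        apply Finset.sum_congr rfl
        intro l _
        ring
      simp only [step]
      rw [Finset.sum_sub_distrib]
      congr 1
      · rw [← Finset.mul_sum, Finset.sum_comm]
        congr 1
        apply Finset.sum_congr rfl
        intro l _
        rw [← Finset.mul_sum]
      · simp [ite_mul]
    have second : ∑ l, ∑ m, U l k * (U l m * X j m) = X j k := by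
      rw [Finset.sum_comm]
      have : ∀ m, ∑ l, U l k * (U l m * X j m) = (if k = m then (1:ℝ) else 0) * X j m := by
        intro m
        rw [← hUU k m, Finset.sum_mul]
        apply Finset.sum_congr rfl
        intro l _
        ring
      simp only [this, ite_mul, one_mul, zero_mul]
      simp
    rw [lhs_eq, rhs_eq, second]
  -- claim 2 : U preserves norms
  have claim2 : ∀ y : Fin r → ℝ, ∑ i, (U.mulVec y i) ^ 2 = ∑ k, y k ^ 2 := by
    intro y
    calc ∑ i, (U.mulVec y i) ^ 2
        = ∑ i, ∑ k, ∑ m, (U i k * y k) * (U i m * y m) := by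
          apply Finset.sum_congr rfl
          intro i _
          simp [Matrix.mulVec, dotProduct, pow_two, Finset.sum_mul_sum]
      _ = ∑ k, ∑ m, (y k * y m) * ∑ i, U i k * U i m := by
          rw [Finset.sum_comm]
          apply Finset.sum_congr rfl
          intro k _
          rw [Finset.sum_comm]
          apply Finset.sum_congr rfl
          intro m _
          rw [Finset.mul_sum]
          apply Finset.sum_congr rfl
          intro i _
          ring
      _ = ∑ k, y k ^ 2 := by
          simp only [hUU, mul_ite, mul_one, mul_zero]
          simp [pow_two]
  -- column formula for the matrix in the statement
  have colM : ∀ i j, (U * Uᵀ * N) i j = (U.mulVec ((B j).mulVec fun m => X j m)) i := by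
    intro i j
    rw [Matrix.mul_assoc, Matrix.mul_apply]
    simp only [claim1]
    rfl
  -- per-column bound
  have colbound : ∀ j, Real.sqrt (∑ i, (U * Uᵀ * N) i j ^ 2) ≤
      δ * vecNorm (fun m => X j m) := by
    intro j
    have h1 : ∑ i, (U * Uᵀ * N) i j ^ 2 = ∑ k, ((B j).mulVec fun m => X j m) k ^ 2 := by
      rw [← claim2]
      apply Finset.sum_congr rfl
      intro i _
      rw [colM i j]
    rw [h1]
    calc Real.sqrt (∑ k, ((B j).mulVec fun m => X j m) k ^ 2)
        = vecNorm ((B j).mulVec fun m => X j m) := rfl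
      _ ≤ specNorm (B j) * vecNorm (fun m => X j m) := mulVec_le_spec _ _
      _ ≤ δ * vecNorm (fun m => X j m) :=
          mul_le_mul_of_nonneg_right (hBspec j) (vecNorm_nonneg _)
  -- conclude
  unfold frobNorm
  rw [Finset.sum_comm]
  have hfinal : ∑ j, ∑ i, (U * Uᵀ * N) i j ^ 2 ≤ δ ^ 2 * ∑ j, ∑ m, X j m ^ 2 := by
    rw [Finset.mul_sum]
    apply Finset.sum_le_sum
    intro j _
    have h0 : 0 ≤ ∑ i, (U * Uᵀ * N) i j ^ 2 := Finset.sum_nonneg fun i _ => sq_nonneg _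
    have := colbound j
    have hsq : ∑ i, (U * Uᵀ * N) i j ^ 2 ≤ (δ * vecNorm (fun m => X j m)) ^ 2 := by
      have := pow_le_pow_left₀ (Real.sqrt_nonneg _) this 2
      rwa [Real.sq_sqrt h0] at this
    calc ∑ i, (U * Uᵀ * N) i j ^ 2 ≤ (δ * vecNorm (fun m => X j m)) ^ 2 := hsq
      _ = δ ^ 2 * ∑ m, X j m ^ 2 := by rw [mul_pow, sq_vecNorm]
  calc Real.sqrt (∑ j, ∑ i, (U * Uᵀ * N) i j ^ 2)
      ≤ Real.sqrt (δ ^ 2 * ∑ j, ∑ m, X j m ^ 2) := Real.sqrt_le_sqrt hfinal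
    _ = δ * Real.sqrt (∑ j, ∑ m, X j m ^ 2) := by
        rw [Real.sqrt_mul (sq_nonneg δ), Real.sqrt_sq hδ]
    _ = δ * frobNorm X := rfl
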